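/- For a non-degenerate simplex Δ in ℝ^n with face areas A_i and Gram matrix G of outward unit normals, the adjugate of G equals c·aaᵀ where a = (A_1,...,A_{n+1}) and c > 0; in particular A_i²/A_j² = adj(G)_{ii}/adj(G)_{jj} for all i, j. -/

import Mathlib

open MeasureTheory RealInnerProductSpace Matrix

noncomputable def faceArea {n : ℕ} (v : Fin (n + 1) → EuclideanSpace ℝ (Fin n))
    (i : Fin (n + 1)) : ℝ :=
  (μH[((n : ℝ) - 1)] (convexHull ℝ (v '' {i}ᶜ))).toReal

def IsOutwardNormal {n : ℕ} (v : Fin (n + 1) → EuclideanSpace ℝ (Fin n))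
    (i : Fin (n + 1)) (u : EuclideanSpace ℝ (Fin n)) : Prop :=
  ‖u‖ = 1 ∧ (∀ j k, j ≠ i → k ≠ i → ⟪u, v j - v k⟫ = 0) ∧
    (∀ j, j ≠ i → ⟪u, v i - v j⟫ < 0)

open scoped NNReal ENNReal

namespace SimplexAux

section Det
variable {n : ℕ}

noncomputable def bas (n : ℕ) : Module.Basis (Fin n) ℝ (EuclideanSpace ℝ (Fin n)) :=
  (EuclideanSpace.basisFun (Fin n) ℝ).toBasis

noncomputable def D (c : Fin n → EuclideanSpace ℝ (Fin n)) : ℝ := (bas n).det c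

def Dmat (c : Fin n → EuclideanSpace ℝ (Fin n)) :
    Matrix (Fin n) (Fin n) ℝ := Matrix.of fun r k => c k r

noncomputable def gram {ι : Type*} (c : ι → EuclideanSpace ℝ (Fin n)) :
    Matrix ι ι ℝ := Matrix.of fun j k => ⟪c j, c k⟫

lemma D_eq (c : Fin n → EuclideanSpace ℝ (Fin n)) : D c = (Dmat c).det := by
  rw [D, Module.Basis.det_apply]
  congr 1

lemma transpose_mul_Dmat (c : Fin n → EuclideanSpace ℝ (Fin n)) :
    (Dmat c)ᵀ * Dmat c = gram c := by
  ext j k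
  simp [Matrix.mul_apply, Dmat, gram, PiLp.inner_apply, RCLike.inner_apply, mul_comm]

lemma D_sq (c : Fin n → EuclideanSpace ℝ (Fin n)) : D c ^ 2 = (gram c).det := by
  rw [← transpose_mul_Dmat, Matrix.det_mul, Matrix.det_transpose, D_eq, sq]

lemma det_constr (u : Fin n → EuclideanSpace ℝ (Fin n)) :
    LinearMap.det (((EuclideanSpace.basisFun (Fin n) ℝ).toBasis).constr ℝ u)
      = (Dmat u).det := by
  rw [← LinearMap.det_toMatrix ((EuclideanSpace.basisFun (Fin n) ℝ).toBasis)]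
  congr 1
  ext j k
  rw [LinearMap.toMatrix_apply, Module.Basis.constr_basis]
  rfl

end Det

section Measure
variable (m : ℕ)

lemma vol_le_haus (s : Set (EuclideanSpace ℝ (Fin m))) :
    volume (WithLp.equiv 2 (Fin m → ℝ) '' s) ≤ μH[(m:ℝ)] s := by
  have h := (PiLp.lipschitzWith_ofLp 2 (fun _ : Fin m => ℝ)).hausdorffMeasure_image_le
    (by positivity : (0:ℝ) ≤ (m:ℝ)) s
  have hvol : (μH[(m:ℝ)] : Measure (Fin m → ℝ)) = volume := by
    rw [← MeasureTheory.hausdorffMeasure_pi_real (ι := Fin m)]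
    norm_num
  rw [hvol] at h
  simpa using h

lemma haus_le_vol : ∃ C : ℝ≥0∞, C ≠ ⊤ ∧ ∀ s : Set (EuclideanSpace ℝ (Fin m)),
    μH[(m:ℝ)] s ≤ C * volume (WithLp.equiv 2 (Fin m → ℝ) '' s) := by
  set K : ℝ≥0 := (Fintype.card (Fin m) : ℝ≥0) ^ ((1:ℝ≥0∞)/2).toReal with hK
  refine ⟨(K : ℝ≥0∞) ^ (m:ℝ), ENNReal.rpow_ne_top_of_nonneg (by positivity)
    ENNReal.coe_ne_top, fun s => ?_⟩
  have h := (PiLp.antilipschitzWith_ofLp 2 (fun _ : Fin m => ℝ)).le_hausdorffMeasure_image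
    (by positivity : (0:ℝ) ≤ (m:ℝ)) s
  have hvol : (μH[(m:ℝ)] : Measure (Fin m → ℝ)) = volume := by
    rw [← MeasureTheory.hausdorffMeasure_pi_real (ι := Fin m)]
    norm_num
  rw [hvol] at h
  exact h

instance : (μH[(m:ℝ)] : Measure (EuclideanSpace ℝ (Fin m))).IsAddLeftInvariant := by
  constructor
  intro g
  have := (IsometryEquiv.addLeft g
    (G := EuclideanSpace ℝ (Fin m))).map_hausdorffMeasure (m:ℝ)
  convert this using 2
  rfl

instance : IsFiniteMeasureOnCompacts (μH[(m:ℝ)] : Measure (EuclideanSpace ℝ (Fin m))) := by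
  constructor
  intro K hK
  obtain ⟨C, hC, hle⟩ := haus_le_vol m
  refine lt_of_le_of_lt (hle K) ?_
  have himg : IsCompact (WithLp.equiv 2 (Fin m → ℝ) '' K) :=
    hK.image (PiLp.lipschitzWith_ofLp 2 (fun _ : Fin m => ℝ)).continuous
  exact ENNReal.mul_lt_top hC.lt_top himg.measure_lt_top

instance : (μH[(m:ℝ)] : Measure (EuclideanSpace ℝ (Fin m))).IsOpenPosMeasure := by
  constructor
  intro U hU hne
  have hopen : IsOpen (WithLp.equiv 2 (Fin m → ℝ) '' U) := by
    rw [Equiv.image_eq_preimage_symm]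
    exact hU.preimage (PiLp.continuous_toLp 2 (fun _ : Fin m => ℝ))
  have hpos : 0 < volume (WithLp.equiv 2 (Fin m → ℝ) '' U) :=
    hopen.measure_pos _ (hne.image _)
  have := lt_of_lt_of_le hpos (vol_le_haus m U)
  exact this.ne'

instance : (μH[(m:ℝ)] : Measure (EuclideanSpace ℝ (Fin m))).IsAddHaarMeasure := ⟨⟩

end Measure

section Simplex
variable (v f : Fin (m+2) → EuclideanSpace ℝ (Fin (m+1)))

noncomputable def bvec (k : Fin (m+1)) : EuclideanSpace ℝ (Fin (m+1)) := v k.succ - v 0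

noncomputable def edges (i : Fin (m+2)) (j : Fin m) : EuclideanSpace ℝ (Fin (m+1)) :=
  v (i.succAbove j.succ) - v (i.succAbove 0)

variable {v f}
variable (hv : AffineIndependent ℝ v) (hf : ∀ i, IsOutwardNormal v i (f i))

include hv in
lemma linIndep_bvec : LinearIndependent ℝ (bvec v) := by
  rw [affineIndependent_iff_linearIndependent_vsub ℝ v 0] at hv
  have := hv.comp (fun k : Fin (m+1) => (⟨k.succ, Fin.succ_ne_zero k⟩ : {x : Fin (m+2) // x ≠ 0}))
    (fun a b hab => by
      simpa using Fin.succ_injective _ (congrArg Subtype.val hab))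
  exact this

include hv in
lemma linIndep_edges (i : Fin (m+2)) : LinearIndependent ℝ (edges v i) := by
  rw [affineIndependent_iff_linearIndependent_vsub ℝ v (i.succAbove 0)] at hv
  have := hv.comp (fun j : Fin m =>
      (⟨i.succAbove j.succ, by
        intro h
        exact Fin.succ_ne_zero j (Fin.succAbove_right_injective (p := i) h)⟩ :
        {x : Fin (m+2) // x ≠ i.succAbove 0}))
    (fun a b hab => by
      have := Fin.succAbove_right_injective (p := i) (congrArg Subtype.val hab)
      simpa using Fin.succ_injective _ this)
  exact this

include hf in
lemma inner_f_edges (i : Fin (m+2)) (j : Fin m) : ⟪f i, edges v i j⟫ = 0 :=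
  (hf i).2.1 _ _ (Fin.succAbove_ne i _) (Fin.succAbove_ne i _)

include hf in
lemma f_ne_zero (i : Fin (m+2)) : f i ≠ 0 := by
  intro h
  have := (hf i).1
  rw [h, norm_zero] at this
  exact zero_ne_one this

include hv hf in
lemma span_edges (i : Fin (m+2)) :
    Submodule.span ℝ (Set.range (edges v i)) = (Submodule.span ℝ {f i})ᗮ := by
  apply Submodule.eq_of_le_of_finrank_eq
  · rw [Submodule.span_le]
    rintro x ⟨j, rfl⟩
    rw [SetLike.mem_coe, Submodule.mem_orthogonal_singleton_iff_inner_left]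
    rw [real_inner_comm]
    exact inner_f_edges hf i j
  · rw [finrank_span_eq_card (linIndep_edges hv i)]
    have h1 : Module.finrank ℝ (Submodule.span ℝ {f i}) = 1 :=
      finrank_span_singleton (f_ne_zero hf i)
    have h2 := Submodule.finrank_add_finrank_orthogonal (K := Submodule.span ℝ {f i})
      (E := EuclideanSpace ℝ (Fin (m+1)))
    rw [h1, finrank_euclideanSpace_fin] at h2
    simp only [Fintype.card_fin]
    omega


variable (v f) in
noncomputable def lam (i : Fin (m+2)) : ℝ := D (Fin.cons (f i) (edges v i))

include hf in
lemma inner_f_self (i : Fin (m+2)) : ⟪f i, f i⟫ = 1 := by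
  rw [real_inner_self_eq_norm_sq, (hf i).1, one_pow]

include hv hf in
lemma lam_inner (i : Fin (m+2)) (x : EuclideanSpace ℝ (Fin (m+1))) :
    lam v f i * ⟪f i, x⟫ = D (Fin.cons x (edges v i)) := by
  set c : ℝ := ⟪f i, x⟫ with hc
  set y : EuclideanSpace ℝ (Fin (m+1)) := x - c • f i with hy
  have hyx : x = c • f i + y := by rw [hy]; abel
  have hyo : ⟪f i, y⟫ = 0 := by
    rw [hy, inner_sub_right, real_inner_smul_right, inner_f_self hf i, mul_one, sub_self]
  have hymem : y ∈ Submodule.span ℝ (Set.range (edges v i)) := by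
    rw [span_edges hv hf i, Submodule.mem_orthogonal_singleton_iff_inner_left]
    rw [real_inner_comm]; exact hyo
  have hdep : ¬ LinearIndependent ℝ (Fin.cons y (edges v i) :
      Fin (m+1) → EuclideanSpace ℝ (Fin (m+1))) := by
    rw [linearIndependent_fin_cons]
    rintro ⟨-, hmem⟩
    exact hmem hymem
  have h0 : D (Fin.cons y (edges v i)) = 0 :=
    AlternatingMap.map_linearDependent (bas (m+1)).det _ hdep
  calc lam v f i * c = c * D (Fin.cons (f i) (edges v i)) := by rw [lam, mul_comm]
    _ = D (Fin.cons (c • f i) (edges v i)) + D (Fin.cons y (edges v i)) := by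
        rw [h0, add_zero, D, D]
        exact (MultilinearMap.cons_smul ((bas (m+1)).det.toMultilinearMap) (edges v i) c (f i)).symm
    _ = D (Fin.cons (c • f i + y) (edges v i)) := by
        rw [D, D, D]
        exact (MultilinearMap.cons_add ((bas (m+1)).det.toMultilinearMap) (edges v i) (c • f i) y).symm
    _ = D (Fin.cons x (edges v i)) := by rw [← hyx]

include hv hf in
lemma lam_ne_zero (i : Fin (m+2)) : lam v f i ≠ 0 := by
  have hind : LinearIndependent ℝ (Fin.cons (f i) (edges v i) :
      Fin (m+1) → EuclideanSpace ℝ (Fin (m+1))) := by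
    rw [linearIndependent_fin_cons]
    refine ⟨linIndep_edges hv i, ?_⟩
    intro hmem
    rw [span_edges hv hf i, Submodule.mem_orthogonal_singleton_iff_inner_left] at hmem
    rw [inner_f_self hf i] at hmem
    exact one_ne_zero hmem
  have := Module.Basis.isUnit_det (bas (m+1)) (basisOfLinearIndependentOfCardEqFinrank hind
    (by simp [finrank_euclideanSpace_fin]))
  rw [coe_basisOfLinearIndependentOfCardEqFinrank] at this
  exact this.ne_zero

include hf in
lemma det_gram_cons (i : Fin (m+2)) :
    (gram (Fin.cons (f i) (edges v i) : Fin (m+1) → EuclideanSpace ℝ (Fin (m+1)))).det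
      = (gram (edges v i)).det := by
  rw [Matrix.det_succ_row_zero, Fin.sum_univ_succ]
  have h0 : (gram (Fin.cons (f i) (edges v i)) : Matrix _ _ ℝ) 0 0 = 1 := by
    simp only [gram, Matrix.of_apply, Fin.cons_zero]
    exact inner_f_self hf i
  have hsucc : ∀ j : Fin m, (gram (Fin.cons (f i) (edges v i)) : Matrix _ _ ℝ) 0 j.succ = 0 := by
    intro j
    simp only [gram, Matrix.of_apply, Fin.cons_zero, Fin.cons_succ]
    exact inner_f_edges hf i j
  rw [h0]
  have : ∀ j : Fin m, (-1 : ℝ) ^ (j.succ : ℕ) *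
      (gram (Fin.cons (f i) (edges v i)) : Matrix _ _ ℝ) 0 j.succ *
      ((gram (Fin.cons (f i) (edges v i))).submatrix Fin.succ j.succ.succAbove).det = 0 := by
    intro j; rw [hsucc j]; ring
  rw [Finset.sum_congr rfl (fun j _ => this j), Finset.sum_const, smul_zero, add_zero]
  have hsub : (gram (Fin.cons (f i) (edges v i))).submatrix Fin.succ (0 : Fin (m+1)).succAbove
      = gram (edges v i) := by
    ext a b
    simp [gram, Matrix.submatrix_apply, Fin.zero_succAbove, Fin.cons_succ]
  rw [hsub]
  simp


def rowMat (c : Fin (m+1) → EuclideanSpace ℝ (Fin (m+1))) :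
    Matrix (Fin (m+1)) (Fin (m+1)) ℝ := Matrix.of fun k r => c k r

lemma D_eq_row (c : Fin (m+1) → EuclideanSpace ℝ (Fin (m+1))) : D c = (rowMat c).det := by
  rw [D_eq, ← Matrix.det_transpose]
  congr 1

variable (v) in
lemma edges_zero : edges v 0 = fun j => bvec v j.succ - bvec v 0 := by
  funext j
  show v ((0 : Fin (m+2)).succAbove j.succ) - v ((0 : Fin (m+2)).succAbove 0) = _
  rw [Fin.zero_succAbove, Fin.zero_succAbove]
  show _ = (v j.succ.succ - v 0) - (v (0 : Fin (m+1)).succ - v 0)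
  rw [sub_sub_sub_cancel_right]

variable (v) in
lemma edges_succ (k : Fin (m+1)) : edges v k.succ = fun j => bvec v (k.succAbove j) := by
  funext j
  show v (k.succ.succAbove j.succ) - v (k.succ.succAbove 0) = v (k.succAbove j).succ - v 0
  rw [Fin.succ_succAbove_succ, Fin.succ_succAbove_zero]

lemma D_cons_edges_zero (k : Fin (m+1)) :
    D (Fin.cons (bvec v k) (edges v 0)) = D (bvec v) := by
  rw [edges_zero v, D_eq_row, D_eq_row]
  induction k using Fin.cases with
  | zero =>
    apply Matrix.det_eq_of_forall_row_eq_smul_add_const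
      (c := fun i : Fin (m+1) => if i = 0 then 0 else -1) (k := (0 : Fin (m+1)))
      (by simp)
    intro i r
    induction i using Fin.cases with
    | zero => simp [rowMat]
    | succ j => simp [rowMat, PiLp.sub_apply, Fin.succ_ne_zero j]; ring
  | succ t =>
    have h1 : (rowMat (Fin.cons (bvec v t.succ) fun j => bvec v j.succ - bvec v 0)).det
        = ((rowMat (Fin.cons (bvec v t.succ) fun j => bvec v j.succ - bvec v 0)).updateRow
            t.succ ((-1 : ℝ) • fun r => bvec v 0 r)).det := by
      rw [show ((-1 : ℝ) • fun r => bvec v 0 r)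
          = (rowMat (Fin.cons (bvec v t.succ) fun j => bvec v j.succ - bvec v 0)) t.succ
            + (-1 : ℝ) • (rowMat (Fin.cons (bvec v t.succ) fun j => bvec v j.succ - bvec v 0)) 0
          from ?_]
      · rw [Matrix.det_updateRow_add_smul_self _ (Fin.succ_ne_zero t) (-1 : ℝ)]
      · funext r
        simp [rowMat, PiLp.sub_apply]
        ring
    rw [h1, Matrix.det_updateRow_smul]
    have h2 : ((rowMat (Fin.cons (bvec v t.succ) fun j => bvec v j.succ - bvec v 0)).updateRow
        t.succ (fun r => bvec v 0 r)).det
        = ((rowMat (bvec v)).submatrix (Equiv.swap 0 t.succ) id).det := by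
      apply Matrix.det_eq_of_forall_row_eq_smul_add_const
        (c := fun i : Fin (m+1) => if i = 0 then 0 else if i = t.succ then 0 else -1)
        (k := t.succ) (by simp)
      intro i r
      have hB : ((rowMat (bvec v)).submatrix (Equiv.swap 0 t.succ) id) t.succ r
          = bvec v 0 r := by
        simp [rowMat, Matrix.submatrix_apply, Equiv.swap_apply_right]
      rw [hB]
      rcases eq_or_ne i t.succ with rfl | hit
      · simp [Matrix.updateRow_apply, rowMat, Matrix.submatrix_apply, Equiv.swap_apply_right]
      · rw [Matrix.updateRow_ne hit]
        induction i using Fin.cases with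
        | zero =>
          simp [rowMat, Matrix.submatrix_apply, Equiv.swap_apply_left]
        | succ j =>
          have hj : j ≠ t := fun h => hit (by rw [h])
          have hsw : Equiv.swap (0 : Fin (m+1)) t.succ j.succ = j.succ :=
            Equiv.swap_apply_of_ne_of_ne (Fin.succ_ne_zero j) hit
          simp [rowMat, Matrix.submatrix_apply, hsw, hit, Fin.succ_ne_zero j,
            PiLp.sub_apply]
          ring
    rw [h2, Matrix.det_permute, Equiv.Perm.sign_swap (Ne.symm (Fin.succ_ne_zero t))]
    push_cast
    ring

lemma abs_D_cons_edges_succ (k : Fin (m+1)) :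
    |D (Fin.cons (bvec v k) (edges v k.succ))| = |D (bvec v)| := by
  have hbij : Function.Bijective
      (Fin.cons k (Fin.succAbove k) : Fin (m+1) → Fin (m+1)) := by
    rw [← Finite.injective_iff_bijective]
    intro a b hab
    induction a using Fin.cases with
    | zero =>
      induction b using Fin.cases with
      | zero => rfl
      | succ j =>
        simp only [Fin.cons_zero, Fin.cons_succ] at hab
        exact absurd hab.symm (Fin.succAbove_ne k j)
    | succ j =>
      induction b using Fin.cases with
      | zero =>
        simp only [Fin.cons_zero, Fin.cons_succ] at hab
        exact absurd hab (Fin.succAbove_ne k j)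
      | succ j' =>
        simp only [Fin.cons_succ] at hab
        rw [Fin.succAbove_right_injective (p := k) hab]
  set σ : Equiv.Perm (Fin (m+1)) := Equiv.ofBijective _ hbij with hσ
  have hcomp : (Fin.cons (bvec v k) (edges v k.succ) : Fin (m+1) → EuclideanSpace ℝ (Fin (m+1)))
      = bvec v ∘ σ := by
    funext j
    have hσ1 : σ j = (Fin.cons k (Fin.succAbove k) : Fin (m+1) → Fin (m+1)) j := rfl
    show (Fin.cons (bvec v k) (edges v k.succ) : Fin (m+1) → EuclideanSpace ℝ (Fin (m+1))) j = bvec v (σ j)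
    rw [hσ1]
    induction j using Fin.cases with
    | zero => rw [Fin.cons_zero, Fin.cons_zero]
    | succ j => rw [Fin.cons_succ, Fin.cons_succ, edges_succ v k]
  rw [D, hcomp, AlternatingMap.map_perm]
  rcases Int.units_eq_one_or (Equiv.Perm.sign σ) with h | h
  · rw [h, one_smul, D]
  · rw [h, D]
    try simp

include hv hf in
lemma minkowski : ∑ i, |lam v f i| • f i = 0 := by
  set y := ∑ i, |lam v f i| • f i with hy
  have hyb : ∀ k : Fin (m+1), ⟪y, bvec v k⟫ = 0 := by
    intro k
    have hsum : ⟪y, bvec v k⟫ = ∑ i, |lam v f i| * ⟪f i, bvec v k⟫ := by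
      rw [hy, sum_inner]
      congr 1
      funext i
      rw [real_inner_smul_left]
    rw [hsum]
    have hzero : ∀ c : Fin (m+2), c ∈ Finset.univ → c ≠ 0 ∧ c ≠ k.succ →
        |lam v f c| * ⟪f c, bvec v k⟫ = 0 := by
      rintro c - ⟨hc0, hck⟩
      have : ⟪f c, bvec v k⟫ = 0 := (hf c).2.1 k.succ 0 (Ne.symm hck) (Ne.symm hc0)
      rw [this, mul_zero]
    rw [Finset.sum_eq_add 0 k.succ (Ne.symm (Fin.succ_ne_zero k)) hzero
      (by simp) (by simp)]
    have hp : 0 < ⟪f 0, bvec v k⟫ := by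
      have := (hf 0).2.2 k.succ (Fin.succ_ne_zero k)
      have heq : (bvec v k : EuclideanSpace ℝ (Fin (m+1))) = -(v 0 - v k.succ) := by
        show v k.succ - v 0 = _; abel
      rw [heq, inner_neg_right]
      linarith
    have hq : ⟪f k.succ, bvec v k⟫ < 0 := (hf k.succ).2.2 0 (Ne.symm (Fin.succ_ne_zero k))
    have h0 : lam v f 0 * ⟪f 0, bvec v k⟫ = D (bvec v) := by
      rw [lam_inner hv hf 0 (bvec v k), D_cons_edges_zero k]
    have h1 : |lam v f k.succ * ⟪f k.succ, bvec v k⟫| = |D (bvec v)| := by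
      rw [lam_inner hv hf k.succ (bvec v k), abs_D_cons_edges_succ k]
    have e0 : |lam v f 0| * ⟪f 0, bvec v k⟫ = |D (bvec v)| := by
      rw [← h0, abs_mul, abs_of_pos hp]
    have e1 : |lam v f k.succ| * ⟪f k.succ, bvec v k⟫ = -|D (bvec v)| := by
      rw [← h1, abs_mul, abs_of_neg hq]
      ring
    rw [e0, e1]
    ring
  have hsp : Submodule.span ℝ (Set.range (bvec v)) = ⊤ := by
    have := (basisOfLinearIndependentOfCardEqFinrank (linIndep_bvec hv)
      (by simp [finrank_euclideanSpace_fin])).span_eq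
    rwa [coe_basisOfLinearIndependentOfCardEqFinrank] at this
  have hall : ⟪y, y⟫ = 0 := by
    have hmem : y ∈ Submodule.span ℝ (Set.range (bvec v)) := by rw [hsp]; trivial
    refine Submodule.span_induction (p := fun x _ => ⟪y, x⟫ = 0) ?_ ?_ ?_ ?_ hmem
    · rintro x ⟨k, rfl⟩; exact hyb k
    · exact inner_zero_right y
    · intro a b _ _ ha hb; rw [inner_add_right, ha, hb, add_zero]
    · intro a x _ hx; rw [real_inner_smul_right, hx, mul_zero]
  exact inner_self_eq_zero.mp hall

set_option maxHeartbeats 1000000 in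
include hv hf in
lemma faceArea_eq : ∃ C : ℝ, 0 < C ∧ ∀ i, faceArea v i = C * |lam v f i| := by
  classical
  set w₀ : Fin (m+1) → EuclideanSpace ℝ (Fin m) :=
    Fin.cons 0 (fun j => EuclideanSpace.basisFun (Fin m) ℝ j) with hw₀
  set C₀ : ℝ≥0∞ := μH[(m:ℝ)] (convexHull ℝ (Set.range w₀)) with hC₀
  have hw₀ind : LinearIndependent ℝ
      (fun j : {x : Fin (m+1) // x ≠ 0} => w₀ j.val - w₀ 0) := by
    have heq : (fun j : {x : Fin (m+1) // x ≠ 0} => w₀ j.val - w₀ 0)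
        = (⇑(EuclideanSpace.basisFun (Fin m) ℝ).toBasis) ∘
            (fun j : {x : Fin (m+1) // x ≠ 0} => j.val.pred j.prop) := by
      funext j
      obtain ⟨jv, hj⟩ := j
      obtain ⟨k, rfl⟩ := Fin.eq_succ_of_ne_zero hj
      show w₀ k.succ - w₀ 0
        = (EuclideanSpace.basisFun (Fin m) ℝ).toBasis (k.succ.pred hj)
      rw [hw₀, Fin.cons_succ, Fin.cons_zero, sub_zero, Fin.pred_succ,
        OrthonormalBasis.coe_toBasis]
    rw [heq]
    refine Module.Basis.linearIndependent _ |>.comp _ ?_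
    intro a b hab
    apply Subtype.ext
    have := congrArg Fin.succ hab
    rwa [Fin.succ_pred, Fin.succ_pred] at this
  have hw₀affind : AffineIndependent ℝ w₀ := by
    rw [affineIndependent_iff_linearIndependent_vsub ℝ w₀ 0]
    exact hw₀ind
  have hspan_top : affineSpan ℝ (Set.range w₀) = ⊤ := by
    rw [hw₀affind.affineSpan_eq_top_iff_card_eq_finrank_add_one]
    simp [finrank_euclideanSpace_fin]
  have hC₀pos : 0 < C₀ := by
    rw [hC₀]
    apply MeasureTheory.Measure.measure_pos_of_nonempty_interior
    rw [interior_convexHull_nonempty_iff_affineSpan_eq_top]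
    exact hspan_top
  have hC₀top : C₀ < ⊤ := by
    rw [hC₀]
    exact ((Set.finite_range w₀).isCompact_convexHull ℝ).measure_lt_top
  refine ⟨C₀.toReal, ENNReal.toReal_pos hC₀pos.ne' hC₀top.ne, fun i => ?_⟩
  -- setup for facet i
  set S : Submodule ℝ (EuclideanSpace ℝ (Fin (m+1))) :=
    Submodule.span ℝ (Set.range (edges v i)) with hS
  have hfinrank : Module.finrank ℝ S = m := by
    rw [hS, finrank_span_eq_card (linIndep_edges hv i)]
    simp
  set ob : OrthonormalBasis (Fin m) ℝ S :=
    (stdOrthonormalBasis ℝ S).reindex (finCongr hfinrank) with hob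
  set L : EuclideanSpace ℝ (Fin m) →ₗᵢ[ℝ] EuclideanSpace ℝ (Fin (m+1)) :=
    S.subtypeₗᵢ.comp ob.repr.symm.toLinearIsometry with hL
  set T : EuclideanSpace ℝ (Fin m) → EuclideanSpace ℝ (Fin (m+1)) :=
    fun x => v (i.succAbove 0) + L x with hT
  have hTiso : Isometry T := by
    have h1 : Isometry (fun y : EuclideanSpace ℝ (Fin (m+1)) => v (i.succAbove 0) + y) :=
      (IsometryEquiv.addLeft (v (i.succAbove 0))).isometry
    exact h1.comp L.isometry
  set u : Fin m → EuclideanSpace ℝ (Fin m) :=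
    fun j => ob.repr ⟨edges v i j, Submodule.subset_span ⟨j, rfl⟩⟩ with hu
  set M : EuclideanSpace ℝ (Fin m) →ₗ[ℝ] EuclideanSpace ℝ (Fin m) :=
    ((EuclideanSpace.basisFun (Fin m) ℝ).toBasis).constr ℝ u with hM
  have hLu : ∀ j, L (u j) = edges v i j := by
    intro j
    rw [hL, hu]
    simp
  have hMw₀ : M ∘ w₀ = Fin.cons 0 u := by
    funext l
    induction l using Fin.cases with
    | zero =>
      show M (w₀ 0) = _
      simp [hw₀]
    | succ j =>
      show M (w₀ j.succ) = (Fin.cons 0 u : Fin (m+1) → EuclideanSpace ℝ (Fin m)) j.succ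
      rw [Fin.cons_succ]
      rw [show w₀ j.succ = (EuclideanSpace.basisFun (Fin m) ℝ).toBasis j by
        rw [hw₀, Fin.cons_succ, OrthonormalBasis.coe_toBasis]]
      rw [hM, Module.Basis.constr_basis]
  have hTim : ∀ (X : Set (EuclideanSpace ℝ (Fin m))),
      T '' (convexHull ℝ X) = convexHull ℝ (T '' X) := by
    intro X
    have hmk : ∀ p' : EuclideanSpace ℝ (Fin m),
        T p' = L.toLinearMap (p' -ᵥ (0 : EuclideanSpace ℝ (Fin m))) +ᵥ T 0 := by
      intro p'
      show v (i.succAbove 0) + L p' = L.toLinearMap (p' - 0) + (v (i.succAbove 0) + L 0)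
      rw [sub_zero, map_zero, add_zero, LinearIsometry.coe_toLinearMap]
      exact add_comm _ _
    have hTc : T = ⇑(AffineMap.mk' T L.toLinearMap 0 hmk) := rfl
    rw [hTc, AffineMap.image_convexHull]
  have hMim : M '' (convexHull ℝ (Set.range w₀))
      = convexHull ℝ (Set.range (Fin.cons 0 u : Fin (m+1) → EuclideanSpace ℝ (Fin m))) := by
    rw [← M.coe_toAffineMap, AffineMap.image_convexHull]
    congr 1
    rw [M.coe_toAffineMap, ← Set.range_comp, hMw₀]
  have hfacet : T '' (M '' (convexHull ℝ (Set.range w₀))) = convexHull ℝ (v '' {i}ᶜ) := by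
    rw [hMim, hTim]
    congr 1
    rw [← Set.range_comp]
    have : T ∘ (Fin.cons 0 u : Fin (m+1) → EuclideanSpace ℝ (Fin m)) = v ∘ i.succAbove := by
      funext l
      induction l using Fin.cases with
      | zero =>
        show T ((Fin.cons 0 u : Fin (m+1) → EuclideanSpace ℝ (Fin m)) 0) = v (i.succAbove 0)
        rw [Fin.cons_zero, hT]
        simp
      | succ j =>
        show T ((Fin.cons 0 u : Fin (m+1) → EuclideanSpace ℝ (Fin m)) j.succ)
          = v (i.succAbove j.succ)
        rw [Fin.cons_succ, hT]
        show v (i.succAbove 0) + L (u j) = v (i.succAbove j.succ)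
        rw [hLu j]
        show v (i.succAbove 0) + (v (i.succAbove j.succ) - v (i.succAbove 0)) = _
        abel
    rw [this, Set.range_comp, Fin.range_succAbove]
  have hd : ((m:ℝ) + 1) - 1 = (m:ℝ) := by ring
  have harea : faceArea v i = (μH[(m:ℝ)] (convexHull ℝ (v '' {i}ᶜ))).toReal := by
    simp only [faceArea]
    norm_num
  rw [harea, ← hfacet, hTiso.hausdorffMeasure_image (Or.inl (by positivity))]
  rw [Measure.addHaar_image_linearMap]
  have hdet : |LinearMap.det M| = |lam v f i| := by
    have h1 : LinearMap.det M = (Dmat u).det := by rw [hM]; exact det_constr u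
    have h2 : (Dmat u).det = D u := (D_eq u).symm
    have h3 : D u ^ 2 = (gram u).det := D_sq u
    have h4 : gram u = gram (edges v i) := by
      ext a b
      show ⟪u a, u b⟫ = ⟪edges v i a, edges v i b⟫
      rw [hu]
      rw [ob.repr.inner_map_map]
      rfl
    have h5 : (gram (edges v i)).det = lam v f i ^ 2 := by
      rw [← det_gram_cons hf i, ← D_sq, lam]
    have : LinearMap.det M ^ 2 = lam v f i ^ 2 := by
      rw [h1, h2, h3, h4, h5]
    rw [← Real.sqrt_sq_eq_abs, ← Real.sqrt_sq_eq_abs, this]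
  rw [ENNReal.toReal_mul, hdet, ENNReal.toReal_ofReal (abs_nonneg _), mul_comm]


include hf in
lemma zero_of_rel (c : Fin (m+2) → ℝ) (t : Fin (m+2)) (hsum : ∑ j, c j • f j = 0)
    (hct : c t = 0) : c = 0 := by
  funext s
  rcases eq_or_ne s t with rfl | hst
  · exact hct
  have h0 : ⟪∑ j, c j • f j, v s - v t⟫ = 0 := by rw [hsum, inner_zero_left]
  rw [sum_inner] at h0
  simp only [real_inner_smul_left] at h0
  have hcollapse : ∀ j, j ∈ Finset.univ → j ≠ s → c j * ⟪f j, v s - v t⟫ = 0 := by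
    rintro j - hjs
    rcases eq_or_ne j t with rfl | hjt
    · rw [hct, zero_mul]
    · rw [(hf j).2.1 s t (Ne.symm hjs) (Ne.symm hjt), mul_zero]
  rw [Finset.sum_eq_single_of_mem s (Finset.mem_univ s) hcollapse] at h0
  have hneg : ⟪f s, v s - v t⟫ < 0 := (hf s).2.2 t (Ne.symm hst)
  have := mul_eq_zero.mp h0
  rcases this with h | h
  · simpa using h
  · exact absurd h hneg.ne

include hv hf in
lemma main_core (G : Matrix (Fin (m+2)) (Fin (m+2)) ℝ)
    (hG : ∀ i j, G i j = ⟪f i, f j⟫) :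
    (∃ c : ℝ, 0 < c ∧
        G.adjugate = c • Matrix.vecMulVec (fun i => faceArea v i) (fun i => faceArea v i)) ∧
      ∀ i j, faceArea v i ^ 2 / faceArea v j ^ 2 = G.adjugate i i / G.adjugate j j := by
  classical
  obtain ⟨C, hCpos, hA⟩ := faceArea_eq hv hf
  set a : Fin (m+2) → ℝ := fun i => faceArea v i with ha
  have hapos : ∀ i, 0 < a i := by
    intro i
    rw [show a i = C * |lam v f i| from hA i]
    exact mul_pos hCpos (abs_pos.mpr (lam_ne_zero hv hf i))
  have hsuma : ∑ j, a j • f j = 0 := by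
    have h1 : ∀ j, a j • f j = C • (|lam v f j| • f j) := by
      intro j
      rw [show a j = C * |lam v f j| from hA j, smul_smul]
    calc ∑ j, a j • f j = ∑ j, C • (|lam v f j| • f j) := by
          exact Finset.sum_congr rfl fun j _ => h1 j
      _ = C • ∑ j, |lam v f j| • f j := (Finset.smul_sum).symm
      _ = 0 := by rw [minkowski hv hf, smul_zero]
  have hker : G.mulVec a = 0 := by
    funext i
    show ∑ j, G i j * a j = 0
    calc ∑ j, G i j * a j = ∑ j, ⟪f i, a j • f j⟫ := by
          refine Finset.sum_congr rfl fun j _ => ?_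
          rw [real_inner_smul_right, hG, mul_comm]
      _ = ⟪f i, ∑ j, a j • f j⟫ := (inner_sum _ _ _).symm
      _ = 0 := by rw [hsuma, inner_zero_right]
  have hane : a ≠ 0 := by
    intro h
    have := hapos 0
    rw [h] at this
    simp at this
  have hdet : G.det = 0 := Matrix.exists_mulVec_eq_zero_iff.mp ⟨a, hane, hker⟩
  have hquad : ∀ x : Fin (m+2) → ℝ, G.mulVec x = 0 → ∑ j, x j • f j = 0 := by
    intro x hx
    have hEntry : ∀ i, ⟪f i, ∑ j, x j • f j⟫ = 0 := by
      intro i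
      rw [inner_sum]
      have : ∀ j, ⟪f i, x j • f j⟫ = G i j * x j := by
        intro j
        rw [real_inner_smul_right, hG, mul_comm]
      rw [Finset.sum_congr rfl fun j _ => this j]
      have := congrFun hx i
      simpa [Matrix.mulVec, dotProduct] using this
    have hself : ⟪∑ j, x j • f j, ∑ j, x j • f j⟫ = 0 := by
      rw [sum_inner]
      refine Finset.sum_eq_zero fun j _ => ?_
      rw [real_inner_smul_left, hEntry j, mul_zero]
    exact inner_self_eq_zero.mp hself
  have hrel : ∀ jj kk, a 0 * G.adjugate kk jj = G.adjugate 0 jj * a kk := by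
    intro jj kk
    set x : Fin (m+2) → ℝ := fun k => G.adjugate k jj with hx
    have hGx : G.mulVec x = 0 := by
      funext i
      have hmul : (G * G.adjugate) i jj = 0 := by
        rw [Matrix.mul_adjugate, hdet]
        simp
      show ∑ k, G i k * x k = 0
      rw [← hmul, Matrix.mul_apply]
    have hxrel := hquad x hGx
    set z : Fin (m+2) → ℝ := fun k => a 0 * x k - x 0 * a k with hz
    have hzsum : ∑ j, z j • f j = 0 := by
      have : ∀ j, z j • f j = a 0 • (x j • f j) - x 0 • (a j • f j) := by
        intro j
        rw [hz]
        simp [sub_smul, smul_smul]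
      rw [Finset.sum_congr rfl fun j _ => this j, Finset.sum_sub_distrib,
        ← Finset.smul_sum, ← Finset.smul_sum, hxrel, hsuma, smul_zero, smul_zero, sub_zero]
    have hz0 : z 0 = 0 := by rw [hz]; ring
    have := zero_of_rel hf z 0 hzsum hz0
    have hzk := congrFun this kk
    rw [hz] at hzk
    simp only [Pi.zero_apply] at hzk
    linarith [hzk]
  have hsym : ∀ i j, G.adjugate i j = G.adjugate j i := by
    intro i j
    have hGsym : Gᵀ = G := by
      ext p q
      rw [Matrix.transpose_apply, hG, hG, real_inner_comm]
    have := Matrix.adjugate_transpose G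
    rw [hGsym] at this
    simpa [Matrix.transpose_apply] using congrFun (congrFun this j) i
  -- positivity of adjugate diagonal entry at 0
  have hfind : LinearIndependent ℝ (f ∘ Fin.succ : Fin (m+1) → EuclideanSpace ℝ (Fin (m+1))) := by
    rw [Fintype.linearIndependent_iff]
    intro g hg k
    set c : Fin (m+2) → ℝ := Fin.cons 0 g with hc
    have hcsum : ∑ j, c j • f j = 0 := by
      rw [Fin.sum_univ_succ]
      have h0 : c 0 • f 0 = 0 := by rw [hc, Fin.cons_zero, zero_smul]
      rw [h0, zero_add]
      have : ∀ k : Fin (m+1), c k.succ • f k.succ = g k • (f ∘ Fin.succ) k := by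
        intro k; rw [hc, Fin.cons_succ]; rfl
      rw [Finset.sum_congr rfl fun k _ => this k]
      exact hg
    have := zero_of_rel hf c 0 hcsum (by rw [hc, Fin.cons_zero])
    have := congrFun this k.succ
    rw [hc] at this
    simpa using this
  have hD_ne : D (f ∘ Fin.succ) ≠ 0 := by
    have := Module.Basis.isUnit_det (bas (m+1)) (basisOfLinearIndependentOfCardEqFinrank hfind
      (by simp [finrank_euclideanSpace_fin]))
    rw [coe_basisOfLinearIndependentOfCardEqFinrank] at this
    exact this.ne_zero
  have hadj00 : 0 < G.adjugate 0 0 := by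
    have h1 : G.adjugate 0 0 = (G.updateRow 0 (Pi.single 0 1)).det := Matrix.adjugate_apply G 0 0
    have h2 : (G.updateRow 0 (Pi.single 0 1)).det
        = ((G.updateRow 0 (Pi.single 0 1)).submatrix Fin.succ
            ((0 : Fin (m+2)).succAbove)).det := by
      rw [Matrix.det_succ_row_zero, Fin.sum_univ_succ]
      have hzero : ∀ j : Fin (m+1), (-1 : ℝ) ^ ((j.succ : Fin (m+2)) : ℕ) *
          (G.updateRow 0 (Pi.single 0 1)) 0 j.succ *
          ((G.updateRow 0 (Pi.single 0 1)).submatrix Fin.succ (j.succ).succAbove).det = 0 := by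
        intro j
        rw [Matrix.updateRow_self, Pi.single_eq_of_ne (Fin.succ_ne_zero j)]
        ring
      rw [Finset.sum_congr rfl fun j _ => hzero j, Finset.sum_const, smul_zero, add_zero]
      rw [Matrix.updateRow_self, Pi.single_eq_same]
      simp
    have h3 : (G.updateRow 0 (Pi.single 0 1)).submatrix Fin.succ
        ((0 : Fin (m+2)).succAbove) = gram (f ∘ Fin.succ) := by
      ext p q
      rw [Matrix.submatrix_apply, Fin.zero_succAbove, Matrix.updateRow_ne (Fin.succ_ne_zero p)]
      rw [hG]
      rfl
    rw [h1, h2, h3, ← D_sq]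
    exact lt_of_le_of_ne (sq_nonneg _) (Ne.symm (pow_ne_zero 2 hD_ne))
  set cst : ℝ := G.adjugate 0 0 / (a 0 * a 0) with hcst
  have hcstpos : 0 < cst := by
    rw [hcst]
    exact div_pos hadj00 (mul_pos (hapos 0) (hapos 0))
  have hformula : ∀ kk jj, G.adjugate kk jj = cst * (a kk * a jj) := by
    intro kk jj
    have h1 := hrel jj kk
    have h2 := hrel 0 jj
    have h3 := hsym 0 jj
    rw [hcst, div_mul_eq_mul_div, eq_div_iff (mul_pos (hapos 0) (hapos 0)).ne']
    linear_combination a 0 * h1 + a kk * h2 + a 0 * a kk * h3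
  constructor
  · refine ⟨cst, hcstpos, ?_⟩
    ext kk jj
    rw [Matrix.smul_apply, Matrix.vecMulVec_apply, smul_eq_mul]
    exact hformula kk jj
  · intro i j
    show a i ^ 2 / a j ^ 2 = _
    rw [hformula i i, hformula j j, mul_div_mul_left _ _ (ne_of_gt hcstpos), sq, sq]


end Simplex
end SimplexAux

/-- For a non-degenerate simplex, the adjugate of the Gram matrix of outward unit
normals is a positive multiple of the outer product `a aᵀ` of the area vector with
itself; in particular `A_i²/A_j² = adj(G)_{ii}/adj(G)_{jj}`. -/
theorem adjugate_gram_eq_pos_smul_outer_area {n : ℕ}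
    (v : Fin (n + 1) → EuclideanSpace ℝ (Fin n)) (hv : AffineIndependent ℝ v)
    (f : Fin (n + 1) → EuclideanSpace ℝ (Fin n))
    (hf : ∀ i, IsOutwardNormal v i (f i))
    (G : Matrix (Fin (n + 1)) (Fin (n + 1)) ℝ) (hG : ∀ i j, G i j = ⟪f i, f j⟫) :
    (∃ c : ℝ, 0 < c ∧
        G.adjugate = c • Matrix.vecMulVec (fun i => faceArea v i) (fun i => faceArea v i)) ∧
      ∀ i j, faceArea v i ^ 2 / faceArea v j ^ 2 = G.adjugate i i / G.adjugate j j := by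
  cases n with
  | zero =>
    exfalso
    have h1 := (hf 0).1
    have h2 : f 0 = 0 := Subsingleton.elim _ _
    rw [h2, norm_zero] at h1
    exact zero_ne_one h1
  | succ m =>
    exact SimplexAux.main_core hv hf G hG
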